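/- Let U ⊆ ℝ^d be an open convex set and ξ : ℝ^d → ℝ ∪ {+∞} a convex function that is finite and differentiable on U, with Bregman divergence D(x, y) = ξ(x) − ξ(y) − ⟨∇ξ(y), x − y⟩ for x ∈ dom ξ, y ∈ U. Let γ ≥ 0 and let h : ℝ^d → ℝ ∪ {+∞} be a proper convex function such that h − γξ is convex on U (i.e. h is γ-strongly convex relative to ξ). Let b ∈ ℝ^d, σ > 0, ȳ ∈ U, and suppose y⁺ ∈ U is a minimizer over ℝ^d of y ↦ h(y) − ⟨b, y⟩ + σ^{-1} D(y, ȳ). Then for every y ∈ U ∩ dom h it holds D(y, ȳ) − D(y⁺, ȳ) − (1 + γσ) D(y, y⁺) ≥ σ ( h(y⁺) − h(y) + ⟨b, y − y⁺⟩ ). -/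

import Mathlib

open scoped RealInnerProductSpace

/-- **Strengthened three-point inequality under relative strong convexity.**
If `h` is `γ`-strongly convex relative to `ξ` on `U` (i.e. `h − γξ` is convex on
`U`) and `y⁺ ∈ U` minimizes `y ↦ h y − ⟪b, y⟫ + σ⁻¹ D y ȳ`, then for every
`y ∈ U ∩ dom h`:
`D y ȳ − D y⁺ ȳ − (1 + γσ) D y y⁺ ≥ σ (h y⁺ − h y + ⟪b, y − y⁺⟫)`. -/
theorem three_point_relative_strong_convexity
    (d : ℕ) (U domξ domh : Set (EuclideanSpace ℝ (Fin d)))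
    (ξ h : EuclideanSpace ℝ (Fin d) → ℝ)
    (g : EuclideanSpace ℝ (Fin d) → EuclideanSpace ℝ (Fin d))
    (hUopen : IsOpen U) (hUconv : Convex ℝ U) (hUsub : U ⊆ domξ)
    (hξ : ConvexOn ℝ domξ ξ)
    (hgrad : ∀ y ∈ U, HasGradientAt ξ (g y) y)
    (D : EuclideanSpace ℝ (Fin d) → EuclideanSpace ℝ (Fin d) → ℝ)
    (hD : ∀ x y, D x y = ξ x - ξ y - ⟪g y, x - y⟫)
    (γ : ℝ) (hγ : 0 ≤ γ)
    (hhne : domh.Nonempty) (hh : ConvexOn ℝ domh h)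
    (hrel : ConvexOn ℝ U (fun y => h y - γ * ξ y))
    (b : EuclideanSpace ℝ (Fin d)) (σ : ℝ) (hσ : 0 < σ)
    (yb yp : EuclideanSpace ℝ (Fin d)) (hyb : yb ∈ U) (hyp : yp ∈ U)
    (hyph : yp ∈ domh)
    (hmin : ∀ y ∈ domh ∩ domξ,
      h yp - ⟪b, yp⟫ + σ⁻¹ * D yp yb ≤ h y - ⟪b, y⟫ + σ⁻¹ * D y yb) :
    ∀ y ∈ U ∩ domh,
      σ * (h yp - h y + ⟪b, y - yp⟫) ≤
        D y yb - D yp yb - (1 + γ * σ) * D y yp := by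
  intro y hy
  obtain ⟨hyU, hyh⟩ := hy
  set v := y - yp with hv
  -- derivative of ξ along the segment at yp
  have hderiv : HasDerivAt (fun t : ℝ => ξ (yp + t • v)) ⟪g yp, v⟫ 0 := by
    have hline : HasDerivAt (fun t : ℝ => yp + t • v) v 0 := by
      simpa using ((hasDerivAt_id (0:ℝ)).smul_const v).const_add yp
    have h1' : HasFDerivAt ξ (InnerProductSpace.toDual ℝ _ (g yp)) (yp + (0:ℝ) • v) := by
      simpa using (hgrad yp hyp).hasFDerivAt
    have h4 := h1'.comp_hasDerivAt 0 hline
    simp at h4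
    exact h4
  -- the slope tends to the directional derivative along 𝓝[>] 0
  have hslope : Filter.Tendsto (fun t : ℝ => (ξ (yp + t • v) - ξ yp) / t)
      (nhdsWithin 0 (Set.Ioi 0)) (nhds ⟪g yp, v⟫) := by
    have h2 := hasDerivAt_iff_tendsto_slope.mp hderiv
    have h3 := h2.mono_left (nhdsWithin_mono (0:ℝ)
      (fun t ht => ne_of_gt (Set.mem_Ioi.mp ht)))
    refine h3.congr fun t => ?_
    simp [slope_def_field]
  -- the combined limit function
  have hlim : Filter.Tendsto
      (fun t : ℝ => (σ⁻¹ + γ) * ((ξ (yp + t • v) - ξ yp) / t)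
        - σ⁻¹ * ⟪g yb, v⟫ - γ * (ξ y - ξ yp))
      (nhdsWithin 0 (Set.Ioi 0))
      (nhds ((σ⁻¹ + γ) * ⟪g yp, v⟫ - σ⁻¹ * ⟪g yb, v⟫ - γ * (ξ y - ξ yp))) :=
    ((hslope.const_mul _).sub_const _).sub_const _
  -- pointwise inequality for small positive t
  have hev : ∀ᶠ t in nhdsWithin (0:ℝ) (Set.Ioi 0),
      h yp - h y + ⟪b, v⟫ ≤ (σ⁻¹ + γ) * ((ξ (yp + t • v) - ξ yp) / t)
        - σ⁻¹ * ⟪g yb, v⟫ - γ * (ξ y - ξ yp) := by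
    filter_upwards [Filter.eventually_mem_set.mpr
      (Ioo_mem_nhdsGT_of_mem (by norm_num : (0:ℝ) ∈ Set.Ico 0 1))] with t ht
    obtain ⟨ht0, ht1⟩ := ht
    set yt := yp + t • v with hyt
    have hyt_eq : (1 - t) • yp + t • y = yt := by
      rw [hyt, hv]; module
    have hytU : yt ∈ U := by
      rw [← hyt_eq]
      exact hUconv hyp hyU (by linarith) (le_of_lt ht0) (by ring)
    have hyth : yt ∈ domh := by
      rw [← hyt_eq]
      exact hh.1 hyph hyh (by linarith) (le_of_lt ht0) (by ring)
    -- minimality at yt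
    have hm := hmin yt ⟨hyth, hUsub hytU⟩
    -- relative convexity at yt
    have hr := hrel.2 hyp hyU (by linarith : (0:ℝ) ≤ 1 - t) (le_of_lt ht0) (by ring)
    rw [hyt_eq] at hr
    simp only [smul_eq_mul] at hr
    -- expand inner products
    have hib : ⟪b, yt⟫ = ⟪b, yp⟫ + t * ⟪b, v⟫ := by
      rw [hyt, inner_add_right, real_inner_smul_right]
    have hig : ⟪g yb, yt - yb⟫ = ⟪g yb, yp - yb⟫ + t * ⟪g yb, v⟫ := by
      have : yt - yb = (yp - yb) + t • v := by rw [hyt]; module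
      rw [this, inner_add_right, real_inner_smul_right]
    rw [hD yt yb, hD yp yb, hib, hig] at hm
    -- scalar inequality before dividing by t
    have key : t * (h yp - h y + ⟪b, v⟫) ≤
        (σ⁻¹ + γ) * (ξ yt - ξ yp) - t * (σ⁻¹ * ⟪g yb, v⟫ + γ * (ξ y - ξ yp)) := by
      nlinarith [hm, hr]
    have h1 : h yp - h y + ⟪b, v⟫ ≤
        ((σ⁻¹ + γ) * (ξ yt - ξ yp) - t * (σ⁻¹ * ⟪g yb, v⟫ + γ * (ξ y - ξ yp))) / t := by
      rw [le_div_iff₀ ht0]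
      nlinarith [key]
    refine h1.trans (le_of_eq ?_)
    field_simp
    ring
  -- pass to the limit
  have hfinal : h yp - h y + ⟪b, v⟫ ≤
      (σ⁻¹ + γ) * ⟪g yp, v⟫ - σ⁻¹ * ⟪g yb, v⟫ - γ * (ξ y - ξ yp) :=
    ge_of_tendsto hlim hev
  -- conclude
  have hsplit1 : ⟪g yb, y - yb⟫ = ⟪g yb, yp - yb⟫ + ⟪g yb, v⟫ := by
    rw [← inner_add_right]; congr 1; rw [hv]; module
  have hyyp : ⟪b, y - yp⟫ = ⟪b, v⟫ := by rw [hv]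
  have hgypv : ⟪g yp, y - yp⟫ = ⟪g yp, v⟫ := by rw [hv]
  rw [hD y yb, hD yp yb, hD y yp, hsplit1, hyyp, hgypv]
  have h2 := mul_le_mul_of_nonneg_left hfinal hσ.le
  have h3 : σ * ((σ⁻¹ + γ) * ⟪g yp, v⟫ - σ⁻¹ * ⟪g yb, v⟫ - γ * (ξ y - ξ yp)) =
      (1 + γ * σ) * ⟪g yp, v⟫ - ⟪g yb, v⟫ - γ * σ * (ξ y - ξ yp) := by
    field_simp
  rw [h3] at h2
  linarith
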